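/- Let A be a finite-dimensional commutative local ℂ-algebra with maximal ideal m and residue field ℂ, regarded as a normed ℂ-algebra. Let ε > 0, γ(t) = ε·e^{2πit}, and let ν ∈ ℤ, a₀ ∈ Aˣ, and a_{−N}, …, a_{−1}, a₁, …, a_M ∈ m. Define h : [0,1] → Aˣ by h(t) = a₀·γ(t)^ν·∏_{j=1}^{N}(1 − a_{−j}γ(t)^{−j})·∏_{j=1}^{M}(1 − a_jγ(t)^{j}) (each factor is invertible since a_{±j} are nilpotent). Then ∫_0^1 h'(t)·h(t)⁻¹ dt = 2πi·ν. -/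

import Mathlib

open MeasureTheory intervalIntegral

/-- The circle of radius `ε` around `0`, parametrized by `t ↦ ε e^{2πit}`. -/
noncomputable def circlePath (ε : ℝ) : ℝ → ℂ :=
  fun t => (ε : ℂ) * Complex.exp (2 * Real.pi * Complex.I * (t : ℂ))

noncomputable def tpiC : ℂ := 2 * Real.pi * Complex.I

lemma tpiC_ne_zero : tpiC ≠ 0 := by
  unfold tpiC
  simp [Real.pi_ne_zero, Complex.I_ne_zero, Complex.ofReal_ne_zero]

lemma circlePath_ne_zero {ε : ℝ} (hε : 0 < ε) (t : ℝ) : circlePath ε t ≠ 0 :=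
  mul_ne_zero (by exact_mod_cast hε.ne') (Complex.exp_ne_zero _)

lemma circlePath_one (ε : ℝ) : circlePath ε 1 = circlePath ε 0 := by
  unfold circlePath
  norm_num [Complex.exp_two_pi_mul_I]

lemma continuous_circlePath (ε : ℝ) : Continuous (circlePath ε) := by
  unfold circlePath
  fun_prop

lemma hasDerivAt_circlePath (ε : ℝ) (t : ℝ) :
    HasDerivAt (circlePath ε) (tpiC * circlePath ε t) t := by
  have h0 : HasDerivAt (fun z : ℂ => tpiC * z) tpiC ((t : ℝ) : ℂ) := by
    simpa using (hasDerivAt_id ((t : ℝ) : ℂ)).const_mul tpiC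
  have h1 : HasDerivAt (fun z : ℂ => (ε : ℂ) * Complex.exp (tpiC * z))
      ((ε : ℂ) * (Complex.exp (tpiC * (t : ℂ)) * tpiC)) (t : ℝ) := h0.cexp.const_mul (ε : ℂ)
  have h2 := h1.comp_ofReal
  have : (ε : ℂ) * (Complex.exp (tpiC * (t : ℂ)) * tpiC) = tpiC * circlePath ε t := by
    unfold circlePath tpiC; ring
  rw [this] at h2
  exact h2

lemma hasDerivAt_circlePath_zpow {ε : ℝ} (hε : 0 < ε) (m : ℤ) (t : ℝ) :
    HasDerivAt (fun t => circlePath ε t ^ m) ((m * tpiC) * circlePath ε t ^ m) t := by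
  have hne := circlePath_ne_zero hε t
  have h := (hasDerivAt_zpow m (circlePath ε t) (Or.inl hne)).comp t (hasDerivAt_circlePath ε t)
  refine h.congr_deriv ?_
  rw [zpow_sub_one₀ hne]
  field_simp

section Aux

variable {A : Type*} [NormedCommRing A] [NormedAlgebra ℂ A]

lemma hasDerivAt_algebraMap_comp {g : ℝ → ℂ} {g' : ℂ} {t : ℝ} (hg : HasDerivAt g g' t) :
    HasDerivAt (fun t => algebraMap ℂ A (g t)) (algebraMap ℂ A g') t := by
  have := (((algebraMapCLM ℂ A).restrictScalars ℝ).hasFDerivAt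
    (x := g t)).comp_hasDerivAt t hg
  exact this

lemma hasDerivAt_mul_log {u v : ℝ → A} {lu lv : A} {t : ℝ}
    (hu : HasDerivAt u (lu * u t) t) (hv : HasDerivAt v (lv * v t) t) :
    HasDerivAt (fun s => u s * v s) ((lu + lv) * (u t * v t)) t := by
  have := hu.mul hv
  refine this.congr_deriv ?_
  ring

lemma hasDerivAt_prod_log {ι : Type*} (s : Finset ι) (u ℓ : ι → ℝ → A) (t : ℝ)
    (hd : ∀ j ∈ s, HasDerivAt (u j) (ℓ j t * u j t) t) :
    HasDerivAt (fun s' => ∏ j ∈ s, u j s') ((∑ j ∈ s, ℓ j t) * ∏ j ∈ s, u j t) t := by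
  classical
  induction s using Finset.cons_induction with
  | empty => simpa using hasDerivAt_const t (1 : A)
  | cons j s hj ih =>
    simp only [Finset.prod_cons, Finset.sum_cons]
    exact hasDerivAt_mul_log (hd j (Finset.mem_cons_self j s))
      (ih (fun i hi => hd i (Finset.mem_cons_of_mem hi)))

lemma isUnit_finset_prod {ι M : Type*} [CommMonoid M] (s : Finset ι) (f : ι → M)
    (h : ∀ j ∈ s, IsUnit (f j)) : IsUnit (∏ j ∈ s, f j) := by
  classical
  revert h
  induction s using Finset.cons_induction with
  | empty => intro _; simpa using isUnit_one
  | cons j s hj ih =>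
    intro h
    rw [Finset.prod_cons]
    exact (h j (Finset.mem_cons_self j s)).mul (ih fun i hi => h i (Finset.mem_cons_of_mem hi))

lemma logDeriv_eq_of {h ℓ : ℝ → A} (hu : ∀ t, IsUnit (h t))
    (hd : ∀ t, HasDerivAt h (ℓ t * h t) t) (t : ℝ) :
    deriv h t * Ring.inverse (h t) = ℓ t := by
  rw [(hd t).deriv, mul_assoc, Ring.mul_inverse_cancel _ (hu t), mul_one]

/-- the logarithmic derivative of the factor `1 - a γ(t)^k`. -/
noncomputable def facLog (ε : ℝ) (a : A) (n : ℕ) (k : ℤ) (t : ℝ) : A :=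
  ∑ i ∈ Finset.range n, a ^ (i + 1) *
    algebraMap ℂ A (-(k * tpiC) * circlePath ε t ^ (k * ((i : ℤ) + 1)))

/-- an antiderivative for `facLog`, as a function of `z = γ(t)`. -/
noncomputable def facAnti (a : A) (n : ℕ) (k : ℤ) (z : ℂ) : A :=
  ∑ i ∈ Finset.range n, a ^ (i + 1) *
    algebraMap ℂ A ((-(k * tpiC) / ((k * ((i : ℤ) + 1)) * tpiC)) * z ^ (k * ((i : ℤ) + 1)))

lemma factor_hasDerivAt {ε : ℝ} (hε : 0 < ε) (a : A) (n : ℕ) (ha : a ^ n = 0) (k : ℤ)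
    (t : ℝ) :
    HasDerivAt (fun t => 1 - a * algebraMap ℂ A (circlePath ε t ^ k))
      (facLog ε a n k t * (1 - a * algebraMap ℂ A (circlePath ε t ^ k))) t := by
  have hne := circlePath_ne_zero hε t
  have h1 : HasDerivAt (fun t => 1 - a * algebraMap ℂ A (circlePath ε t ^ k))
      (-(a * algebraMap ℂ A ((k * tpiC) * circlePath ε t ^ k))) t := by
    have := (hasDerivAt_algebraMap_comp (A := A)
      (hasDerivAt_circlePath_zpow hε k t)).const_mul a
    exact this.const_sub 1
  convert h1 using 1
  set g : ℕ → A := fun i => a ^ (i + 1) *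
    algebraMap ℂ A (-(k * tpiC) * circlePath ε t ^ (k * ((i : ℤ) + 1))) with hg
  have step : ∀ i : ℕ, g i * (1 - a * algebraMap ℂ A (circlePath ε t ^ k))
      = g i - g (i + 1) := by
    intro i
    have hz : circlePath ε t ^ (k * ((i : ℤ) + 1)) * circlePath ε t ^ k
        = circlePath ε t ^ (k * (((i + 1 : ℕ) : ℤ) + 1)) := by
      rw [← zpow_add₀ hne]
      congr 1
      push_cast
      ring
    rw [mul_sub, mul_one]
    congr 1
    calc g i * (a * algebraMap ℂ A (circlePath ε t ^ k))
        = a ^ (i + 1 + 1) * algebraMap ℂ A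
            ((-(k * tpiC) * circlePath ε t ^ (k * ((i : ℤ) + 1))) * circlePath ε t ^ k) := by
          rw [map_mul, hg]; ring
      _ = g (i + 1) := by
          rw [hg]
          congr 2
          rw [mul_assoc, hz]
  have hgn : g n = 0 := by
    simp [hg, pow_succ, ha]
  calc facLog ε a n k t * (1 - a * algebraMap ℂ A (circlePath ε t ^ k))
      = ∑ i ∈ Finset.range n, (g i - g (i + 1)) := by
        rw [facLog, Finset.sum_mul]
        exact Finset.sum_congr rfl fun i _ => step i
    _ = g 0 - g n := Finset.sum_range_sub' g n
    _ = -(a * algebraMap ℂ A ((k * tpiC) * circlePath ε t ^ k)) := by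
        rw [hgn, sub_zero]
        simp only [hg, Nat.cast_zero, zero_add, mul_one, pow_one, neg_mul, map_neg, map_mul]
        ring

lemma factor_anti_hasDerivAt {ε : ℝ} (hε : 0 < ε) (a : A) (n : ℕ) (k : ℤ) (hk : k ≠ 0)
    (t : ℝ) :
    HasDerivAt (fun t => facAnti a n k (circlePath ε t)) (facLog ε a n k t) t := by
  unfold facAnti facLog
  apply HasDerivAt.fun_sum
  intro i _
  have hk' : (k : ℂ) ≠ 0 := Int.cast_ne_zero.2 hk
  have hi : ((i : ℕ) : ℂ) + 1 ≠ 0 := Nat.cast_add_one_ne_zero i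
  have h3 := tpiC_ne_zero
  have hw : (-(↑k * tpiC) / (↑k * (((i : ℕ) : ℂ) + 1) * tpiC)) *
      (((k * ((i : ℤ) + 1) : ℤ) : ℂ) * tpiC) = -(↑k * tpiC) := by
    push_cast
    field_simp
  have h2 : HasDerivAt (fun t => (-(↑k * tpiC) / (↑k * (((i : ℕ) : ℂ) + 1) * tpiC)) *
        circlePath ε t ^ (k * ((i : ℤ) + 1)))
      (-(↑k * tpiC) * circlePath ε t ^ (k * ((i : ℤ) + 1))) t := by
    have h := (hasDerivAt_circlePath_zpow hε (k * ((i : ℤ) + 1)) t).const_mul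
      (-(↑k * tpiC) / (↑k * (((i : ℕ) : ℂ) + 1) * tpiC))
    refine h.congr_deriv ?_
    rw [← mul_assoc, hw]
  exact (hasDerivAt_algebraMap_comp (A := A) h2).const_mul (a ^ (i + 1))

lemma continuous_facLog (ε : ℝ) (hε : 0 < ε) (a : A) (n : ℕ) (k : ℤ) :
    Continuous (facLog ε a n k) := by
  unfold facLog
  refine continuous_finset_sum _ fun i _ => Continuous.mul continuous_const ?_
  refine ((algebraMapCLM ℂ A).continuous).comp (Continuous.mul continuous_const ?_)
  exact (continuous_circlePath ε).zpow₀ _ fun t => Or.inl (circlePath_ne_zero hε t)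

end Aux

/-- Let `A` be a finite-dimensional commutative local `ℂ`-algebra (normed `ℂ`-algebra)
with residue field `ℂ`, `γ (t) = ε e^{2πit}`, and
`h (t) = a₀ γ(t)^ν ∏_{j=1}^{N} (1 − a_{−j} γ(t)^{−j}) ∏_{j=1}^{M} (1 − a_j γ(t)^{j})`
with `a₀ ∈ Aˣ` and all `a_{±j}` in the maximal ideal (hence nilpotent, so each factor is
invertible).  Then `∫_0^1 h'(t) h(t)⁻¹ dt = 2πi ν`. -/
theorem integral_logDeriv_eq_two_pi_I_valuation
    (A : Type*) [NormedCommRing A] [NormedAlgebra ℂ A] [FiniteDimensional ℂ A]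
    [IsLocalRing A]
    (hres : Function.Bijective ((IsLocalRing.residue A).comp (algebraMap ℂ A)))
    (ε : ℝ) (hε : 0 < ε) (ν : ℤ) (a₀ : Aˣ) (N M : ℕ)
    (aneg : Fin N → A) (apos : Fin M → A)
    (hneg : ∀ j, aneg j ∈ IsLocalRing.maximalIdeal A)
    (hpos : ∀ j, apos j ∈ IsLocalRing.maximalIdeal A)
    (h : ℝ → A)
    (hdef : ∀ t : ℝ, h t =
      (a₀ : A) * algebraMap ℂ A (circlePath ε t ^ ν) *
        (∏ j : Fin N, (1 - aneg j * algebraMap ℂ A (circlePath ε t ^ (-(j : ℤ) - 1)))) *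
        ∏ j : Fin M, (1 - apos j * algebraMap ℂ A (circlePath ε t ^ ((j : ℕ) + 1)))) :
    ∫ t in (0 : ℝ)..1, deriv h t * Ring.inverse (h t) =
      algebraMap ℂ A (2 * Real.pi * Complex.I * (ν : ℂ)) := by
  classical
  -- uniform nilpotency exponent
  obtain ⟨n, hn⟩ : ∃ n : ℕ, ∀ x ∈ IsLocalRing.maximalIdeal A, x ^ n = 0 := by
    have hart : IsArtinianRing A := isArtinian_of_tower ℂ inferInstance
    obtain ⟨n, hn⟩ := IsArtinianRing.isNilpotent_jacobson_bot (R := A)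
    refine ⟨n, fun x hx => ?_⟩
    have hx' : x ^ n ∈ (Ideal.jacobson (⊥ : Ideal A)) ^ n :=
      Ideal.pow_mem_pow (by rwa [IsLocalRing.jacobson_eq_maximalIdeal ⊥ bot_ne_top]) n
    rw [hn] at hx'
    simpa using hx'
  -- switch the natural power to an integer power
  have hposcast : ∀ (t : ℝ) (j : Fin M),
      circlePath ε t ^ ((j : ℕ) + 1) = circlePath ε t ^ (((j : ℕ) : ℤ) + 1) := by
    intro t j
    rw [show (((j : ℕ) : ℤ) + 1) = (((j : ℕ) + 1 : ℕ) : ℤ) by push_cast; ring, zpow_natCast]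
  -- data for the factors
  set k₁ : Fin N → ℤ := fun j => -(j : ℤ) - 1 with hk₁
  set k₂ : Fin M → ℤ := fun j => ((j : ℕ) : ℤ) + 1 with hk₂
  have hk₁ne : ∀ j, k₁ j ≠ 0 := by
    intro j; simp only [hk₁]; omega
  have hk₂ne : ∀ j, k₂ j ≠ 0 := by
    intro j; simp only [hk₂]; omega
  have hannil : ∀ j, (aneg j) ^ n = 0 := fun j => hn _ (hneg j)
  have hapnil : ∀ j, (apos j) ^ n = 0 := fun j => hn _ (hpos j)
  -- the pieces of h
  set u₁ : ℝ → A := fun _ => (a₀ : A) with hu₁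
  set u₂ : ℝ → A := fun t => algebraMap ℂ A (circlePath ε t ^ ν) with hu₂
  set u₃ : ℝ → A := fun t =>
    ∏ j : Fin N, (1 - aneg j * algebraMap ℂ A (circlePath ε t ^ (k₁ j))) with hu₃
  set u₄ : ℝ → A := fun t =>
    ∏ j : Fin M, (1 - apos j * algebraMap ℂ A (circlePath ε t ^ (k₂ j))) with hu₄
  have hh : ∀ t, h t = u₁ t * u₂ t * u₃ t * u₄ t := by
    intro t
    rw [hdef t, hu₁, hu₂, hu₃, hu₄]
    simp only [hposcast t]
    rfl
  have hhfun : h = fun t => u₁ t * u₂ t * u₃ t * u₄ t := funext hh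
  -- logarithmic derivatives
  set ℓ : ℝ → A := fun t =>
    ((0 + algebraMap ℂ A ((ν : ℂ) * tpiC)) + ∑ j : Fin N, facLog ε (aneg j) n (k₁ j) t) +
      ∑ j : Fin M, facLog ε (apos j) n (k₂ j) t with hℓ
  have hD : ∀ t, HasDerivAt h (ℓ t * h t) t := by
    intro t
    have h1 : HasDerivAt u₁ ((0 : A) * u₁ t) t := by
      simpa using hasDerivAt_const t (a₀ : A)
    have h2 : HasDerivAt u₂ (algebraMap ℂ A ((ν : ℂ) * tpiC) * u₂ t) t := by
      have := hasDerivAt_algebraMap_comp (A := A) (hasDerivAt_circlePath_zpow hε ν t)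
      rw [hu₂]
      convert this using 1
      simp only [← map_mul]
    have h3 : HasDerivAt u₃ ((∑ j : Fin N, facLog ε (aneg j) n (k₁ j) t) * u₃ t) t := by
      rw [hu₃]
      exact hasDerivAt_prod_log Finset.univ _ _ t
        (fun j _ => factor_hasDerivAt hε (aneg j) n (hannil j) (k₁ j) t)
    have h4 : HasDerivAt u₄ ((∑ j : Fin M, facLog ε (apos j) n (k₂ j) t) * u₄ t) t := by
      rw [hu₄]
      exact hasDerivAt_prod_log Finset.univ _ _ t
        (fun j _ => factor_hasDerivAt hε (apos j) n (hapnil j) (k₂ j) t)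
    have hm := hasDerivAt_mul_log (hasDerivAt_mul_log (hasDerivAt_mul_log h1 h2) h3) h4
    rw [hhfun, hℓ]
    exact hm
  -- h is everywhere invertible
  have hU : ∀ t, IsUnit (h t) := by
    intro t
    rw [hh t]
    have hne := circlePath_ne_zero hε t
    refine (((a₀.isUnit.mul ?_).mul ?_).mul ?_)
    · exact (IsUnit.map (algebraMap ℂ A) (isUnit_iff_ne_zero.2 (zpow_ne_zero ν hne)))
    · refine isUnit_finset_prod _ _ fun j _ => ?_
      exact IsNilpotent.isUnit_one_sub ⟨n, by
        rw [mul_pow, hannil j, zero_mul]⟩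
    · refine isUnit_finset_prod _ _ fun j _ => ?_
      exact IsNilpotent.isUnit_one_sub ⟨n, by
        rw [mul_pow, hapnil j, zero_mul]⟩
  -- rewrite the integrand
  have hint : ∀ t, deriv h t * Ring.inverse (h t) = ℓ t := logDeriv_eq_of hU hD
  simp only [hint]
  -- the antiderivative
  set Φ : ℝ → A := fun t =>
    ((0 + algebraMap ℂ A ((ν : ℂ) * tpiC * (t : ℂ))) +
      ∑ j : Fin N, facAnti (aneg j) n (k₁ j) (circlePath ε t)) +
      ∑ j : Fin M, facAnti (apos j) n (k₂ j) (circlePath ε t) with hΦ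
  have hΦD : ∀ t ∈ Set.uIcc (0 : ℝ) 1, HasDerivAt Φ (ℓ t) t := by
    intro t _
    rw [hΦ, hℓ]
    refine HasDerivAt.add (HasDerivAt.add (HasDerivAt.add ?_ ?_) ?_) ?_
    · simpa using hasDerivAt_const t (0 : A)
    · have hid : HasDerivAt (fun s : ℝ => ((ν : ℂ) * tpiC) * (s : ℂ)) ((ν : ℂ) * tpiC) t := by
        have := (Complex.ofRealCLM.hasDerivAt (x := t)).const_mul ((ν : ℂ) * tpiC)
        simpa using this
      exact hasDerivAt_algebraMap_comp (A := A) hid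
    · exact HasDerivAt.fun_sum fun j _ =>
        factor_anti_hasDerivAt hε (aneg j) n (k₁ j) (hk₁ne j) t
    · exact HasDerivAt.fun_sum fun j _ =>
        factor_anti_hasDerivAt hε (apos j) n (k₂ j) (hk₂ne j) t
  have hcont : Continuous ℓ := by
    rw [hℓ]
    refine ((continuous_const.add ?_).add ?_).add ?_
    · exact continuous_const
    · exact continuous_finset_sum _ fun j _ => continuous_facLog ε hε _ n _
    · exact continuous_finset_sum _ fun j _ => continuous_facLog ε hε _ n _
  rw [intervalIntegral.integral_eq_sub_of_hasDerivAt hΦD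
    (hcont.intervalIntegrable 0 1)]
  rw [hΦ]
  simp only [circlePath_one, Complex.ofReal_one, Complex.ofReal_zero, mul_one, mul_zero,
    map_zero]
  rw [show (2 : ℂ) * Real.pi * Complex.I * (ν : ℂ) = (ν : ℂ) * tpiC by unfold tpiC; ring]
  abel
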